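/- Let B₁ be the c×c upper bidiagonal matrix with B₁(i,i) = (i+1)μ₁ for 0 ≤ i ≤ c-1 and B₁(i,i+1) = (c-i-1)μ₂ for 0 ≤ i < c-1 (zero elsewhere), and let Δ_{c-1} = diag(jμ₁ + (c-1-j)μ₂, 0 ≤ j ≤ c-1). Define D̃₁ = μ₁ I + B₁⁻¹ Δ_{c-1} B₁. Then the row vector φ* = (0, …, 0, 1) of length c satisfies φ*(B₁ - D̃₁) = 0, i.e., φ* is a left eigenvector of B₁ - D̃₁ with eigenvalue 0. -/

import Mathlib

open Matrix

lemma single_vecMul_eq {c : ℕ} (i : Fin c) (M : Matrix (Fin c) (Fin c) ℝ) :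
    (Pi.single i (1:ℝ)) ᵥ* M = M i := by
  ext j
  simp [Matrix.vecMul, dotProduct, Pi.single_apply, Finset.sum_ite_eq]

/-- φ* = (0,…,0,1) is a left null vector of B₁ - D̃₁,
where D̃₁ = μ₁ I + B₁⁻¹ Δ_{c-1} B₁. -/
theorem stmt_5 (c : ℕ) (hc : 1 ≤ c) (mu1 mu2 : ℝ) (hmu1 : 0 < mu1) (hmu2 : 0 < mu2)
    (B1 : Matrix (Fin c) (Fin c) ℝ)
    (hB1 : B1 = Matrix.of fun (i j : Fin c) =>
      if (j : ℕ) = (i : ℕ) then ((i : ℕ) + 1 : ℝ) * mu1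
      else if (j : ℕ) = (i : ℕ) + 1 then ((c - 1 - (i : ℕ) : ℕ) : ℝ) * mu2
      else 0)
    (Δ : Matrix (Fin c) (Fin c) ℝ)
    (hΔ : Δ = Matrix.diagonal fun j : Fin c =>
      ((j : ℕ) : ℝ) * mu1 + ((c - 1 - (j : ℕ) : ℕ) : ℝ) * mu2)
    (D1 : Matrix (Fin c) (Fin c) ℝ)
    (hD1 : D1 = mu1 • (1 : Matrix (Fin c) (Fin c) ℝ) + B1⁻¹ * Δ * B1)
    (φ : Fin c → ℝ) (hφ : φ = fun j : Fin c => if (j : ℕ) = c - 1 then 1 else 0) :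
    φ ᵥ* (B1 - D1) = 0 := by
  set last : Fin c := ⟨c - 1, by omega⟩ with hlast
  have hφ' : φ = (Pi.single last 1 : Fin c → ℝ) := by
    rw [hφ]; ext j
    rcases eq_or_ne j last with h | h
    · subst h; simp; rfl
    · have hj : (j : ℕ) ≠ c - 1 := fun hh => h (Fin.ext hh)
      simp [Pi.single_apply, hj, h]
  -- last row of B1
  have hrowB : B1 last = (↑c * mu1) • (Pi.single last 1 : Fin c → ℝ) := by
    ext j
    rcases eq_or_ne j last with h | h
    · subst h
      have : ((c - 1 : ℕ) : ℝ) + 1 = (c : ℝ) := by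
        have : ((c - 1 : ℕ) : ℝ) = (c : ℝ) - 1 := by
          push_cast [Nat.cast_sub hc]; ring
        rw [this]; ring
      simp [hB1, this]
      left; exact this
    · have hj : (j : ℕ) ≠ c - 1 := fun hh => h (Fin.ext hh)
      have hj2 : (j : ℕ) ≠ (c - 1) + 1 := by omega
      simp [hB1, Pi.single_apply, hj, hj2, h]
      rw [show ((last : Fin c) : ℕ) = c - 1 from rfl]; simp [hj, hj2]
  -- last row of Δ
  have hrowΔ : Δ last = ((↑c - 1) * mu1) • (Pi.single last 1 : Fin c → ℝ) := by
    ext j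
    rcases eq_or_ne j last with h | h
    · subst h
      have h0 : c - 1 - (c - 1) = 0 := by omega
      have : ((c - 1 : ℕ) : ℝ) = (c : ℝ) - 1 := by
        push_cast [Nat.cast_sub hc]; ring
      simp [hΔ, h0, this]
      rw [show ((last : Fin c) : ℕ) = c - 1 from rfl, h0, this]; simp
    · simp [hΔ, Matrix.diagonal_apply_ne' _ h, Pi.single_apply, h]
  have hφB : φ ᵥ* B1 = (↑c * mu1) • φ := by
    rw [hφ', single_vecMul_eq, hrowB]
  have hφΔ : φ ᵥ* Δ = ((↑c - 1) * mu1) • φ := by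
    rw [hφ', single_vecMul_eq, hrowΔ]
  -- B1 is invertible
  have hdet : IsUnit B1.det := by
    have htri : B1.BlockTriangular id := by
      intro i j hij
      have hij' : (j : ℕ) < (i : ℕ) := hij
      have h1 : (j : ℕ) ≠ (i : ℕ) := by omega
      have h2 : (j : ℕ) ≠ (i : ℕ) + 1 := by omega
      simp [hB1, h1, h2]
    rw [Matrix.det_of_upperTriangular htri]
    refine (Finset.prod_ne_zero_iff.mpr fun i _ => ?_).isUnit
    have hdiag : B1 i i = (((i : ℕ) : ℝ) + 1) * mu1 := by simp [hB1]
    rw [hdiag]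
    positivity
  have hBBinv : B1 * B1⁻¹ = 1 := Matrix.mul_nonsing_inv _ hdet
  have hcmu : (↑c : ℝ) * mu1 ≠ 0 := by
    have : (0:ℝ) < (c:ℝ) := by exact_mod_cast hc
    positivity
  have hφBinv : φ ᵥ* B1⁻¹ = (↑c * mu1)⁻¹ • φ := by
    have h1 : ((↑c * mu1) • φ) ᵥ* B1⁻¹ = φ := by
      rw [← hφB, Matrix.vecMul_vecMul, hBBinv, Matrix.vecMul_one]
    rw [Matrix.smul_vecMul] at h1
    calc φ ᵥ* B1⁻¹ = (↑c * mu1)⁻¹ • ((↑c * mu1) • (φ ᵥ* B1⁻¹)) := by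
          rw [smul_smul, inv_mul_cancel₀ hcmu, one_smul]
      _ = (↑c * mu1)⁻¹ • φ := by rw [h1]
  have hterm : φ ᵥ* (B1⁻¹ * Δ * B1) = ((↑c - 1) * mu1) • φ := by
    rw [← Matrix.vecMul_vecMul, ← Matrix.vecMul_vecMul, hφBinv,
      Matrix.smul_vecMul, hφΔ, smul_smul, Matrix.smul_vecMul, hφB, smul_smul]
    congr 1
    field_simp
  have hsmul1 : φ ᵥ* (mu1 • (1 : Matrix (Fin c) (Fin c) ℝ)) = mu1 • φ := by
    ext j
    simp [Matrix.vecMul, dotProduct, Matrix.one_apply, mul_ite,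
      Finset.mul_sum, mul_comm]
  rw [Matrix.vecMul_sub, hD1, Matrix.vecMul_add, hterm, hsmul1, hφB]
  ext j
  simp only [Pi.sub_apply, Pi.add_apply, Pi.smul_apply, Pi.zero_apply, smul_eq_mul]
  ring
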